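/- For every I ≥ 1 there exist constants C_I > 0 and ε_I > 0 such that the following holds. Let ε ∈ (0, ε_I] and let ω ∈ (L^∞ ∩ L^1)(ℝ²) be Lipschitz with |ω| ≤ 1 a.e., ‖ω‖_{L¹} ≤ I, and ‖∇ω‖_{L^∞} ≤ 1/ε. Then, with m := min{ ‖∇ω‖_{L^∞}^{−1}, 1 }, the Biot–Savart velocity u of ω satisfies u₁(−ε,0) − u₁(ε,0) ≤ ((4 |ln m| + C_I)/π) ε. -/

import Mathlib

open MeasureTheory Real Filter Set
open scoped NNReal

noncomputable section

/-- The Biot–Savart velocity of a vorticity `ω ∈ (L^∞ ∩ L¹)(ℝ²)`: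
`u(x) = (1/(2π)) ∫_{ℝ²} ((x₂ − y₂, y₁ − x₁)/|x − y|²) ω(y) dy`. -/
def biotSavart (ω : ℝ × ℝ → ℝ) (x : ℝ × ℝ) : ℝ × ℝ :=
  ((1 / (2 * π)) * ∫ y : ℝ × ℝ, ((x.2 - y.2) / ((x.1 - y.1) ^ 2 + (x.2 - y.2) ^ 2)) * ω y,
   (1 / (2 * π)) * ∫ y : ℝ × ℝ, ((y.1 - x.1) / ((x.1 - y.1) ^ 2 + (x.2 - y.2) ^ 2)) * ω y)

namespace Stmt11

theorem integrable_comp_polarCoord_symm_iff (f : ℝ × ℝ → ℝ) :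
    Integrable f ↔
      IntegrableOn (fun p : ℝ × ℝ => p.1 • f (polarCoord.symm p)) polarCoord.target := by
  set B : ℝ × ℝ → ℝ × ℝ →L[ℝ] ℝ × ℝ := fun p =>
    LinearMap.toContinuousLinearMap (Matrix.toLin (Module.Basis.finTwoProd ℝ) (Module.Basis.finTwoProd ℝ)
      !![cos p.2, -p.1 * sin p.2; sin p.2, p.1 * cos p.2]) with hB
  have B_det : ∀ p : ℝ × ℝ, (B p).det = p.1 := by
    intro p
    conv_rhs => rw [← one_mul p.1, ← cos_sq_add_sin_sq p.2]
    simp only [hB, neg_mul, LinearMap.det_toContinuousLinearMap, LinearMap.det_toLin,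
      Matrix.det_fin_two_of, sub_neg_eq_add]
    ring
  have hinj : InjOn polarCoord.symm polarCoord.target := by
    have := polarCoord.symm.injOn
    rwa [OpenPartialHomeomorph.symm_source] at this
  have h1 : Integrable f ↔ IntegrableOn f polarCoord.source := by
    constructor
    · intro h; exact h.integrableOn
    · intro h
      rw [← integrableOn_univ]
      exact h.congr_set_ae polarCoord_source_ae_eq_univ.symm
  have h2 : IntegrableOn f polarCoord.source ↔
      IntegrableOn (fun p : ℝ × ℝ => |(B p).det| • f (polarCoord.symm p)) polarCoord.target := by
    rw [← polarCoord.symm_image_target_eq_source]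
    exact integrableOn_image_iff_integrableOn_abs_det_fderiv_smul volume
      polarCoord.open_target.measurableSet
      (fun p _ => (hasFDerivAt_polarCoord_symm p).hasFDerivWithinAt) hinj f
  rw [h1, h2]
  constructor
  · intro h
    refine h.congr_fun (fun p hp => ?_) polarCoord.open_target.measurableSet
    beta_reduce
    rw [B_det, abs_of_pos hp.1]
  · intro h
    refine h.congr_fun (fun p hp => ?_) polarCoord.open_target.measurableSet
    rw [B_det, abs_of_pos hp.1]

theorem integrableOn_target_prod {φ ψ : ℝ → ℝ} (hφ : IntegrableOn φ (Ioi 0))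
    (hψ : IntegrableOn ψ (Ioo (-π) π)) :
    IntegrableOn (fun p : ℝ × ℝ => φ p.1 * ψ p.2) polarCoord.target := by
  rw [IntegrableOn, polarCoord_target, Measure.volume_eq_prod, ← Measure.prod_restrict]
  exact hφ.mul_prod hψ

theorem integral_target_prod (φ ψ : ℝ → ℝ) :
    ∫ p : ℝ × ℝ in polarCoord.target, φ p.1 * ψ p.2 =
      (∫ r in Ioi (0:ℝ), φ r) * ∫ θ in Ioo (-π) π, ψ θ := by
  rw [polarCoord_target, Measure.volume_eq_prod, ← Measure.prod_restrict]
  exact integral_prod_mul φ ψ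

/-- Main radial computation tool. -/
theorem radial_calc {F : ℝ × ℝ → ℝ} {φ ψ : ℝ → ℝ}
    (hF : ∀ r θ : ℝ, 0 < r → r * F (r * cos θ, r * sin θ) = φ r * ψ θ)
    (hφ : IntegrableOn φ (Ioi 0)) (hψ : IntegrableOn ψ (Ioo (-π) π)) :
    Integrable F ∧ ∫ y : ℝ × ℝ, F y = (∫ r in Ioi (0:ℝ), φ r) * ∫ θ in Ioo (-π) π, ψ θ := by
  have heq : EqOn (fun p : ℝ × ℝ => p.1 • F (polarCoord.symm p))
      (fun p : ℝ × ℝ => φ p.1 * ψ p.2) polarCoord.target := by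
    rintro ⟨r, θ⟩ hp
    rw [polarCoord_target] at hp
    have hr : 0 < r := hp.1
    have := hF r θ hr
    simpa [polarCoord_symm_apply, smul_eq_mul] using this
  have hint : IntegrableOn (fun p : ℝ × ℝ => p.1 • F (polarCoord.symm p)) polarCoord.target :=
    (integrableOn_target_prod hφ hψ).congr_fun (fun p hp => (heq hp).symm)
      polarCoord.open_target.measurableSet
  refine ⟨(integrable_comp_polarCoord_symm_iff F).2 hint, ?_⟩
  rw [← integral_comp_polarCoord_symm F,
    setIntegral_congr_fun polarCoord.open_target.measurableSet heq, integral_target_prod]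


theorem ind_const_integrableOn (R : ℝ) :
    IntegrableOn (Set.indicator (Icc (0:ℝ) R) (fun _ => (1:ℝ))) (Ioi 0) := by
  refine Integrable.integrableOn ?_
  rw [integrable_indicator_iff measurableSet_Icc]
  exact integrableOn_const measure_Icc_lt_top.ne

theorem Ioi_inter_Icc (R : ℝ) : Ioi (0:ℝ) ∩ Icc 0 R = Ioc 0 R := by
  ext x
  simp only [mem_inter_iff, mem_Ioi, mem_Icc, mem_Ioc]
  constructor
  · rintro ⟨h1, _, h3⟩; exact ⟨h1, h3⟩
  · rintro ⟨h1, h2⟩; exact ⟨h1, h1.le, h2⟩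

theorem ind_const_integral (R : ℝ) (hR : 0 ≤ R) :
    ∫ r in Ioi (0:ℝ), Set.indicator (Icc (0:ℝ) R) (fun _ => (1:ℝ)) r = R := by
  rw [setIntegral_indicator measurableSet_Icc, Ioi_inter_Icc, setIntegral_const, measureReal_def,
    Real.volume_Ioc, smul_eq_mul, mul_one, ENNReal.toReal_ofReal (by linarith)]
  simp

theorem ind_inv_integrableOn {a b : ℝ} (ha : 0 < a) :
    IntegrableOn (Set.indicator (Icc a b) (fun r : ℝ => r⁻¹)) (Ioi 0) := by
  refine Integrable.integrableOn ?_
  rw [integrable_indicator_iff measurableSet_Icc]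
  refine ContinuousOn.integrableOn_compact isCompact_Icc ?_
  refine ContinuousOn.inv₀ continuousOn_id ?_
  intro x hx
  exact ne_of_gt (lt_of_lt_of_le ha hx.1)

theorem ind_inv_integral {a b : ℝ} (ha : 0 < a) (hab : a ≤ b) :
    ∫ r in Ioi (0:ℝ), Set.indicator (Icc a b) (fun r : ℝ => r⁻¹) r = Real.log (b / a) := by
  rw [setIntegral_indicator measurableSet_Icc]
  have h1 : Ioi (0:ℝ) ∩ Icc a b = Icc a b := by
    rw [inter_eq_right]
    intro x hx; exact lt_of_lt_of_le ha hx.1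
  rw [h1, integral_Icc_eq_integral_Ioc, ← intervalIntegral.integral_of_le hab]
  exact integral_inv (by
    intro h
    rcases h with ⟨h1, _⟩
    rw [min_eq_left hab] at h1
    exact absurd h1 (not_le.2 ha))

theorem ind_cube_integrableOn {c : ℝ} (hc : 0 < c) :
    IntegrableOn (Set.indicator (Ici c) (fun r : ℝ => (r ^ 3)⁻¹)) (Ioi 0) := by
  refine Integrable.integrableOn ?_
  rw [integrable_indicator_iff measurableSet_Ici]
  have h0 : IntegrableOn (fun t : ℝ => t ^ (-3 : ℝ)) (Ioi c) :=
    integrableOn_Ioi_rpow_of_lt (by norm_num) hc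
  have h1 : IntegrableOn (fun r : ℝ => (r ^ 3)⁻¹) (Ioi c) := by
    refine h0.congr_fun (fun x hx => ?_) measurableSet_Ioi
    have hx0 : (0:ℝ) < x := lt_trans hc hx
    beta_reduce
    rw [Real.rpow_neg hx0.le, ← Real.rpow_natCast x 3]
    norm_num
  exact h1.congr_set_ae Ioi_ae_eq_Ici.symm

theorem ind_cube_integral {c : ℝ} (hc : 0 < c) :
    ∫ r in Ioi (0:ℝ), Set.indicator (Ici c) (fun r : ℝ => (r ^ 3)⁻¹) r = (c ^ 2)⁻¹ / 2 := by
  rw [setIntegral_indicator measurableSet_Ici]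
  have h1 : Ioi (0:ℝ) ∩ Ici c = Ici c := by
    rw [inter_eq_right]; intro x hx; exact lt_of_lt_of_le hc hx
  rw [h1, integral_Ici_eq_integral_Ioi]
  have h2 : ∫ r in Ioi c, (r ^ 3)⁻¹ = ∫ r in Ioi c, r ^ (-3 : ℝ) := by
    refine setIntegral_congr_fun measurableSet_Ioi (fun x hx => ?_)
    have hx0 : (0:ℝ) < x := lt_trans hc hx
    rw [Real.rpow_neg hx0.le, ← Real.rpow_natCast x 3]
    norm_num
  rw [h2, integral_Ioi_rpow_of_lt (by norm_num) hc]
  rw [show (-3 : ℝ) + 1 = -2 by norm_num, Real.rpow_neg hc.le, ← Real.rpow_natCast c 2]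
  norm_num


theorem psi_const_integrableOn (c : ℝ) : IntegrableOn (fun _ : ℝ => c) (Ioo (-π) π) :=
  integrableOn_const measure_Ioo_lt_top.ne

theorem psi_const_integral (c : ℝ) : ∫ _ in Ioo (-π) π, c = 2 * π * c := by
  rw [setIntegral_const, measureReal_def, Real.volume_Ioo, smul_eq_mul,
    ENNReal.toReal_ofReal (by linarith [pi_pos] : (0:ℝ) ≤ π - -π)]
  ring

theorem sincos_antideriv (a b : ℝ) :
    ∫ x in a..b, sin x * cos x = sin b ^ 2 / 2 - sin a ^ 2 / 2 := by
  have hd : ∀ x : ℝ, HasDerivAt (fun x => sin x ^ 2 / 2) (sin x * cos x) x := by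
    intro x
    have h1 : HasDerivAt (fun x : ℝ => sin x ^ 2 / 2) (2 * sin x ^ 1 * cos x / 2) x :=
      ((hasDerivAt_sin x).pow 2).div_const 2
    convert h1 using 1
    ring
  refine intervalIntegral.integral_deriv_eq_sub' (fun x => sin x ^ 2 / 2) (funext fun x => (hd x).deriv)
    (fun x _ => (hd x).differentiableAt) ?_
  exact (continuous_sin.mul continuous_cos).continuousOn

theorem psi_abs_integrableOn : IntegrableOn (fun θ : ℝ => 2 * |cos θ * sin θ|) (Ioo (-π) π) :=
  ((continuous_const.mul (continuous_cos.mul continuous_sin).abs)).integrableOn_Icc.mono_set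
    Ioo_subset_Icc_self

theorem psi_abs_integral : ∫ θ in Ioo (-π) π, 2 * |cos θ * sin θ| = 4 := by
  have pi2 : (0:ℝ) < π / 2 := by linarith [pi_pos]
  have key : ∫ θ in Ioo (-π) π, |cos θ * sin θ| = 2 := by
    rw [← integral_Ioc_eq_integral_Ioo, ← intervalIntegral.integral_of_le (by linarith [pi_pos])]
    have i1 := ((continuous_cos.mul continuous_sin).abs).intervalIntegrable
      (μ := volume) (-π) (-(π/2))
    have i2 := ((continuous_cos.mul continuous_sin).abs).intervalIntegrable
      (μ := volume) (-(π/2)) 0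
    have i3 := ((continuous_cos.mul continuous_sin).abs).intervalIntegrable
      (μ := volume) (0:ℝ) (π/2)
    have i4 := ((continuous_cos.mul continuous_sin).abs).intervalIntegrable
      (μ := volume) (π/2) π
    simp only [Pi.mul_apply] at i1 i2 i3 i4
    have hadd : (∫ x in (-π)..(-(π/2)), |cos x * sin x|) + (∫ x in (-(π/2))..0, |cos x * sin x|)
        + (∫ x in (0:ℝ)..(π/2), |cos x * sin x|) + (∫ x in (π/2)..π, |cos x * sin x|)
        = ∫ x in (-π)..π, |cos x * sin x| := by
      rw [intervalIntegral.integral_add_adjacent_intervals i1 i2,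
        intervalIntegral.integral_add_adjacent_intervals (i1.trans i2) i3,
        intervalIntegral.integral_add_adjacent_intervals ((i1.trans i2).trans i3) i4]
    rw [← hadd]
    have e1 : ∫ x in (-π)..(-(π/2)), |cos x * sin x| = 1/2 := by
      have hq : EqOn (fun x => |cos x * sin x|) (fun x => sin x * cos x)
          (uIcc (-π) (-(π/2))) := by
        intro x hx
        rw [uIcc_of_le (by linarith [pi_pos])] at hx
        have hs : sin x ≤ 0 := sin_nonpos_of_nonpos_of_neg_pi_le (by linarith [hx.2]) hx.1
        have hc : cos x ≤ 0 := by
          rw [← cos_neg]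
          exact cos_nonpos_of_pi_div_two_le_of_le (by linarith [hx.2]) (by linarith [hx.1, pi_pos])
        have hp : (0:ℝ) ≤ sin x * cos x := by
          nlinarith [mul_nonneg (neg_nonneg.2 hs) (neg_nonneg.2 hc)]
        dsimp only
        rw [mul_comm (cos x) (sin x), abs_of_nonneg hp]
      rw [intervalIntegral.integral_congr hq, sincos_antideriv]
      simp [sin_neg, sin_pi_div_two, sin_pi]
    have e2 : ∫ x in (-(π/2))..0, |cos x * sin x| = 1/2 := by
      have hq : EqOn (fun x => |cos x * sin x|) (fun x => -(sin x * cos x))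
          (uIcc (-(π/2)) 0) := by
        intro x hx
        rw [uIcc_of_le (by linarith [pi2])] at hx
        have hs : sin x ≤ 0 := sin_nonpos_of_nonpos_of_neg_pi_le hx.2 (by linarith [hx.1, pi_pos])
        have hc : 0 ≤ cos x := cos_nonneg_of_mem_Icc ⟨by linarith [hx.1], by linarith [hx.2, pi2]⟩
        have hp : sin x * cos x ≤ 0 := mul_nonpos_of_nonpos_of_nonneg hs hc
        dsimp only
        rw [mul_comm (cos x) (sin x), abs_of_nonpos hp]
      rw [intervalIntegral.integral_congr hq, intervalIntegral.integral_neg, sincos_antideriv]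
      simp [sin_neg, sin_pi_div_two]
    have e3 : ∫ x in (0:ℝ)..(π/2), |cos x * sin x| = 1/2 := by
      have hq : EqOn (fun x => |cos x * sin x|) (fun x => sin x * cos x) (uIcc 0 (π/2)) := by
        intro x hx
        rw [uIcc_of_le (by linarith [pi2])] at hx
        have hs : 0 ≤ sin x := sin_nonneg_of_nonneg_of_le_pi hx.1 (by linarith [hx.2, pi2])
        have hc : 0 ≤ cos x := cos_nonneg_of_mem_Icc ⟨by linarith [hx.1, pi2], hx.2⟩
        have hp : (0:ℝ) ≤ sin x * cos x := mul_nonneg hs hc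
        dsimp only
        rw [mul_comm (cos x) (sin x), abs_of_nonneg hp]
      rw [intervalIntegral.integral_congr hq, sincos_antideriv]
      simp [sin_pi_div_two]
    have e4 : ∫ x in (π/2)..π, |cos x * sin x| = 1/2 := by
      have hq : EqOn (fun x => |cos x * sin x|) (fun x => -(sin x * cos x)) (uIcc (π/2) π) := by
        intro x hx
        rw [uIcc_of_le (by linarith [pi2])] at hx
        have hs : 0 ≤ sin x := sin_nonneg_of_nonneg_of_le_pi (by linarith [hx.1, pi2]) hx.2
        have hc : cos x ≤ 0 := cos_nonpos_of_pi_div_two_le_of_le hx.1 (by linarith [hx.2, pi_pos])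
        have hp : sin x * cos x ≤ 0 := mul_nonpos_of_nonneg_of_nonpos hs hc
        dsimp only
        rw [mul_comm (cos x) (sin x), abs_of_nonpos hp]
      rw [intervalIntegral.integral_congr hq, intervalIntegral.integral_neg, sincos_antideriv]
      simp [sin_pi_div_two, sin_pi]
    rw [e1, e2, e3, e4]
    norm_num
  rw [MeasureTheory.integral_const_mul, key]
  norm_num


/-- truncated inverse-distance kernel -/
def gker (R : ℝ) (z : ℝ × ℝ) : ℝ :=
  if z.1 ^ 2 + z.2 ^ 2 ≤ R ^ 2 then (Real.sqrt (z.1 ^ 2 + z.2 ^ 2))⁻¹ else 0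

theorem gker_nonneg (R : ℝ) (z : ℝ × ℝ) : 0 ≤ gker R z := by
  unfold gker; split_ifs
  · positivity
  · exact le_rfl

theorem key_polar (r θ : ℝ) : (r * cos θ) ^ 2 + (r * sin θ) ^ 2 = r ^ 2 := by
  nlinarith [sin_sq_add_cos_sq θ]

theorem sq_le_sq_iff_of_pos {r R : ℝ} (hr : 0 < r) (hR : 0 < R) : r ^ 2 ≤ R ^ 2 ↔ r ≤ R := by
  constructor <;> intro h <;> nlinarith

theorem gker_calc {R : ℝ} (hR : 0 < R) :
    Integrable (gker R) ∧ ∫ z : ℝ × ℝ, gker R z = R * (2 * π * 1) := by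
  have h := radial_calc (F := gker R) (φ := Set.indicator (Icc (0:ℝ) R) (fun _ => (1:ℝ)))
    (ψ := fun _ => (1:ℝ)) ?_ (ind_const_integrableOn R) (psi_const_integrableOn 1)
  · rcases h with ⟨h1, h2⟩
    refine ⟨h1, ?_⟩
    rw [h2, ind_const_integral R hR.le, psi_const_integral 1]
  · intro r θ hr
    have key := key_polar r θ
    simp only [gker, key]
    by_cases h : r ≤ R
    · rw [if_pos ((sq_le_sq_iff_of_pos hr hR).2 h), Set.indicator_of_mem (mem_Icc.2 ⟨hr.le, h⟩),
        Real.sqrt_sq hr.le]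
      field_simp
    · rw [if_neg (fun hh => h ((sq_le_sq_iff_of_pos hr hR).1 hh)),
        Set.indicator_of_notMem (fun hh => h (mem_Icc.1 hh).2)]
      simp

/-- annulus kernel -/
def ann (a b : ℝ) (z : ℝ × ℝ) : ℝ :=
  if a ^ 2 ≤ z.1 ^ 2 + z.2 ^ 2 ∧ z.1 ^ 2 + z.2 ^ 2 ≤ b ^ 2 then
    2 * |z.1 * z.2| / (z.1 ^ 2 + z.2 ^ 2) ^ 2 else 0

theorem ann_nonneg (a b : ℝ) (z : ℝ × ℝ) : 0 ≤ ann a b z := by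
  unfold ann; split_ifs
  · positivity
  · exact le_rfl

theorem ann_calc {a b : ℝ} (ha : 0 < a) (hab : a ≤ b) :
    Integrable (ann a b) ∧ ∫ z : ℝ × ℝ, ann a b z = Real.log (b / a) * 4 := by
  have hb : 0 < b := lt_of_lt_of_le ha hab
  have h := radial_calc (F := ann a b) (φ := Set.indicator (Icc a b) (fun r : ℝ => r⁻¹))
    (ψ := fun θ => 2 * |cos θ * sin θ|) ?_ (ind_inv_integrableOn ha) psi_abs_integrableOn
  · rcases h with ⟨h1, h2⟩
    refine ⟨h1, ?_⟩
    rw [h2, ind_inv_integral ha hab, psi_abs_integral]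
  · intro r θ hr
    have key := key_polar r θ
    simp only [ann, key]
    by_cases h : a ≤ r ∧ r ≤ b
    · rw [if_pos ⟨(sq_le_sq_iff_of_pos ha hr).2 h.1, (sq_le_sq_iff_of_pos hr hb).2 h.2⟩,
        Set.indicator_of_mem (mem_Icc.2 h)]
      have habs : |r * cos θ * (r * sin θ)| = r ^ 2 * |cos θ * sin θ| := by
        rw [show r * cos θ * (r * sin θ) = r ^ 2 * (cos θ * sin θ) by ring, abs_mul,
          abs_of_nonneg (sq_nonneg r)]
      rw [habs]
      field_simp
    · rw [if_neg, Set.indicator_of_notMem (fun hh => h (mem_Icc.1 hh))]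
      · simp
      · intro hh
        exact h ⟨(sq_le_sq_iff_of_pos ha hr).1 hh.1, (sq_le_sq_iff_of_pos hr hb).1 hh.2⟩

/-- far field kernel -/
def far (c k : ℝ) (z : ℝ × ℝ) : ℝ :=
  if c ^ 2 ≤ z.1 ^ 2 + z.2 ^ 2 then k / (z.1 ^ 2 + z.2 ^ 2) ^ 2 else 0

theorem far_nonneg (c k : ℝ) (hk : 0 ≤ k) (z : ℝ × ℝ) : 0 ≤ far c k z := by
  unfold far; split_ifs
  · positivity
  · exact le_rfl

theorem far_calc {c k : ℝ} (hc : 0 < c) :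
    Integrable (far c k) ∧ ∫ z : ℝ × ℝ, far c k z = (c ^ 2)⁻¹ / 2 * (2 * π * k) := by
  have h := radial_calc (F := far c k) (φ := Set.indicator (Ici c) (fun r : ℝ => (r ^ 3)⁻¹))
    (ψ := fun _ => k) ?_ (ind_cube_integrableOn hc) (psi_const_integrableOn k)
  · rcases h with ⟨h1, h2⟩
    refine ⟨h1, ?_⟩
    rw [h2, ind_cube_integral hc, psi_const_integral k]
  · intro r θ hr
    have key := key_polar r θ
    simp only [far, key]
    by_cases h : c ≤ r
    · rw [if_pos ((sq_le_sq_iff_of_pos hc hr).2 h), Set.indicator_of_mem (mem_Ici.2 h)]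
      field_simp
    · rw [if_neg (fun hh => h ((sq_le_sq_iff_of_pos hc hr).1 hh)),
        Set.indicator_of_notMem (fun hh => h (mem_Ici.1 hh))]
      simp


theorem gker_def (R : ℝ) (z : ℝ × ℝ) : gker R z =
  if z.1 ^ 2 + z.2 ^ 2 ≤ R ^ 2 then (Real.sqrt (z.1 ^ 2 + z.2 ^ 2))⁻¹ else 0 := rfl

theorem ann_def (a b : ℝ) (z : ℝ × ℝ) : ann a b z =
  if a ^ 2 ≤ z.1 ^ 2 + z.2 ^ 2 ∧ z.1 ^ 2 + z.2 ^ 2 ≤ b ^ 2 then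
    2 * |z.1 * z.2| / (z.1 ^ 2 + z.2 ^ 2) ^ 2 else 0 := rfl

theorem far_def (c k : ℝ) (z : ℝ × ℝ) : far c k z =
  if c ^ 2 ≤ z.1 ^ 2 + z.2 ^ 2 then k / (z.1 ^ 2 + z.2 ^ 2) ^ 2 else 0 := rfl

theorem AB_identity (ε a b : ℝ) :
    ((a+ε)^2+b^2) * ((a-ε)^2+b^2) = (a^2+b^2-ε^2)^2 + 4*ε^2*b^2 := by ring

theorem AB_lower {ε a b : ℝ} (hs : (2*ε)^2 ≤ a^2+b^2) :
    (3/4*(a^2+b^2))^2 ≤ ((a+ε)^2+b^2) * ((a-ε)^2+b^2) := by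
  have hid := AB_identity ε a b
  have f1 : 0 ≤ a^2+b^2 - ε^2 - 3/4*(a^2+b^2) := by nlinarith [sq_nonneg ε]
  have f2 : 0 ≤ a^2+b^2 - ε^2 + 3/4*(a^2+b^2) := by nlinarith [sq_nonneg ε]
  nlinarith [mul_nonneg f1 f2, sq_nonneg (ε*b)]

theorem abs_prod_le_half {a b : ℝ} : |a*b| ≤ (a^2+b^2)/2 := by
  rw [abs_mul]
  nlinarith [sq_nonneg (|a| - |b|), sq_abs a, sq_abs b, abs_nonneg a, abs_nonneg b]

/-- Case 1: near-field bound. -/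
theorem case_near {ε a b : ℝ} (hε : 0 < ε) (hs : a^2+b^2 ≤ (2*ε)^2) :
    |a*b| / (((a+ε)^2+b^2) * ((a-ε)^2+b^2)) * 2 ≤
      (4/ε) * ((Real.sqrt ((a+ε)^2+b^2))⁻¹ + (Real.sqrt ((a-ε)^2+b^2))⁻¹) := by
  set A := (a+ε)^2+b^2 with hA
  set B := (a-ε)^2+b^2 with hB
  have hA0 : 0 ≤ A := by positivity
  have hB0 : 0 ≤ B := by positivity
  have haleb : |a| ≤ 2*ε := by nlinarith [sq_abs a, abs_nonneg a, sq_nonneg b]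
  rcases eq_or_lt_of_le hA0 with h0 | hApos
  · have hb : b = 0 := by nlinarith [sq_nonneg (a+ε), sq_nonneg b]
    rw [show |a*b| = 0 by rw [hb]; simp]
    rw [zero_div, zero_mul]
    positivity
  rcases eq_or_lt_of_le hB0 with h0 | hBpos
  · have hb : b = 0 := by nlinarith [sq_nonneg (a-ε), sq_nonneg b]
    rw [show |a*b| = 0 by rw [hb]; simp]
    rw [zero_div, zero_mul]
    positivity
  have hbA : |b| ≤ Real.sqrt A := by
    rw [← Real.sqrt_sq_eq_abs]
    exact Real.sqrt_le_sqrt (by nlinarith [sq_nonneg (a+ε)])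
  have hbB : |b| ≤ Real.sqrt B := by
    rw [← Real.sqrt_sq_eq_abs]
    exact Real.sqrt_le_sqrt (by nlinarith [sq_nonneg (a-ε)])
  have hsA : Real.sqrt A * Real.sqrt A = A := Real.mul_self_sqrt hA0
  have hsB : Real.sqrt B * Real.sqrt B = B := Real.mul_self_sqrt hB0
  have hsApos : 0 < Real.sqrt A := Real.sqrt_pos.2 hApos
  have hsBpos : 0 < Real.sqrt B := Real.sqrt_pos.2 hBpos
  by_cases hcase : ε^2 ≤ A
  · -- use the B term
    have step : |a*b| / (A*B) * 2 ≤ (4/ε) * (Real.sqrt B)⁻¹ := by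
      rw [div_mul_eq_mul_div, div_le_iff₀ (by positivity)]
      rw [show A*B = A*(Real.sqrt B*Real.sqrt B) from by rw [hsB]]
      rw [show 4/ε * (Real.sqrt B)⁻¹ * (A*(Real.sqrt B*Real.sqrt B)) =
        (4*(A*Real.sqrt B)/ε)*((Real.sqrt B)⁻¹*Real.sqrt B) from by ring,
        inv_mul_cancel₀ (ne_of_gt hsBpos), mul_one, le_div_iff₀ hε]
      have t1 : |a| *|b| ≤ 2*ε*Real.sqrt B :=
        mul_le_mul haleb hbB (abs_nonneg b) (by positivity)
      have t2 : ε^2*Real.sqrt B ≤ A*Real.sqrt B :=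
        mul_le_mul_of_nonneg_right hcase hsBpos.le
      rw [abs_mul]
      nlinarith [t1, t2, hε.le, hsBpos.le, abs_nonneg a, abs_nonneg b]
    refine le_trans step ?_
    rw [mul_add]
    exact le_add_of_nonneg_left (by positivity)
  · push_neg at hcase
    have hcaseB : ε^2 ≤ B := by nlinarith [sq_nonneg a, sq_nonneg b]
    have step : |a*b| / (A*B) * 2 ≤ (4/ε) * (Real.sqrt A)⁻¹ := by
      rw [div_mul_eq_mul_div, div_le_iff₀ (by positivity)]
      rw [show A*B = (Real.sqrt A*Real.sqrt A)*B from by rw [hsA]]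
      rw [show 4/ε * (Real.sqrt A)⁻¹ * ((Real.sqrt A*Real.sqrt A)*B) =
        (4*(B*Real.sqrt A)/ε)*((Real.sqrt A)⁻¹*Real.sqrt A) from by ring,
        inv_mul_cancel₀ (ne_of_gt hsApos), mul_one, le_div_iff₀ hε]
      have t1 : |a| *|b| ≤ 2*ε*Real.sqrt A :=
        mul_le_mul haleb hbA (abs_nonneg b) (by positivity)
      have t2 : ε^2*Real.sqrt A ≤ B*Real.sqrt A :=
        mul_le_mul_of_nonneg_right hcaseB hsApos.le
      rw [abs_mul]
      nlinarith [t1, t2, hε.le, hsApos.le, abs_nonneg a, abs_nonneg b]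
    refine le_trans step ?_
    rw [mul_add]
    exact le_add_of_nonneg_right (by positivity)

/-- Case 2a : Lipschitz region. -/
theorem case_lip {ε a b κ : ℝ} (hε : 0 < ε) (hκ : 0 ≤ κ) (hs : (2*ε)^2 ≤ a^2+b^2) :
    |a*b| / (((a+ε)^2+b^2) * ((a-ε)^2+b^2)) * (2*(κ*|b|)) ≤
      32*κ/9 * (Real.sqrt (a^2+b^2))⁻¹ := by
  set s := a^2+b^2 with hsdef
  have hspos : 0 < s := by nlinarith
  have hAB : (3/4*s)^2 ≤ ((a+ε)^2+b^2) * ((a-ε)^2+b^2) := AB_lower hs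
  have hABpos : 0 < ((a+ε)^2+b^2) * ((a-ε)^2+b^2) := by nlinarith
  have hss : Real.sqrt s * Real.sqrt s = s := Real.mul_self_sqrt hspos.le
  have hspos' : 0 < Real.sqrt s := Real.sqrt_pos.2 hspos
  have ha : |a| ≤ Real.sqrt s := by
    rw [← Real.sqrt_sq_eq_abs]; exact Real.sqrt_le_sqrt (by nlinarith [sq_nonneg b])
  have hb : |b| ≤ Real.sqrt s := by
    rw [← Real.sqrt_sq_eq_abs]; exact Real.sqrt_le_sqrt (by nlinarith [sq_nonneg a])
  rw [div_mul_eq_mul_div, div_le_iff₀ hABpos]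
  have h2 : 32*κ/9 * (Real.sqrt s)⁻¹ * (((a+ε)^2+b^2) * ((a-ε)^2+b^2)) =
      32*κ/9*(((a+ε)^2+b^2) * ((a-ε)^2+b^2))/Real.sqrt s := by
    rw [div_eq_mul_inv (32*κ/9*(((a+ε)^2+b^2) * ((a-ε)^2+b^2)))]
    ring
  rw [h2, le_div_iff₀ hspos']
  have p1 : |a| *|b| ≤ s := by nlinarith [abs_nonneg a, abs_nonneg b]
  have p2 : |b| *Real.sqrt s ≤ s := by nlinarith [abs_nonneg b]
  have p3 : |a| *|b| *(|b| *Real.sqrt s) ≤ s*s :=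
    mul_le_mul p1 p2 (by positivity) hspos.le
  rw [abs_mul]
  have hκss : κ*(s*s) = κ*((a^2+b^2)*(a^2+b^2)) := by rw [hsdef]
  nlinarith [mul_le_mul_of_nonneg_left p3 hκ, mul_le_mul_of_nonneg_left hAB hκ,
    mul_nonneg hκ hspos.le, hκss]

/-- Case 2b : annulus. -/
theorem case_ann {ε a b : ℝ} (hε : 0 < ε) (hs : (2*ε)^2 ≤ a^2+b^2) :
    |a*b| / (((a+ε)^2+b^2) * ((a-ε)^2+b^2)) * 2 ≤
      2*|a*b|/(a^2+b^2)^2 + 32/9*ε^2/(a^2+b^2)^2 := by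
  set s := a^2+b^2 with hsdef
  have hspos : 0 < s := by nlinarith
  have hAB : (3/4*s)^2 ≤ ((a+ε)^2+b^2) * ((a-ε)^2+b^2) := AB_lower hs
  have hAB' : (s - ε^2)^2 ≤ ((a+ε)^2+b^2) * ((a-ε)^2+b^2) := by
    nlinarith [AB_identity ε a b, sq_nonneg (ε*b)]
  have hABpos : 0 < ((a+ε)^2+b^2) * ((a-ε)^2+b^2) := by nlinarith
  have ht : |a*b| ≤ s/2 := by nlinarith [abs_prod_le_half (a := a) (b := b)]
  have ht0 : 0 ≤ |a*b| := abs_nonneg _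
  have he : 0 ≤ ε^2 := sq_nonneg ε
  have h4e : 4*ε^2 ≤ s := by nlinarith
  rw [← add_div, div_mul_eq_mul_div, div_le_div_iff₀ hABpos (by positivity)]
  have hkey : |a*b| *2*s^2 ≤ (2*|a*b| + 32/9*ε^2)*((s - ε^2)^2) := by
    nlinarith [mul_nonneg (mul_nonneg he (sub_nonneg.2 ht)) (by nlinarith : (0:ℝ) ≤ 2*s - ε^2),
      mul_nonneg he (sq_nonneg (s - 4*ε^2)),
      mul_nonneg (mul_nonneg he he) (by nlinarith : (0:ℝ) ≤ s - 4*ε^2),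
      mul_nonneg (mul_nonneg he he) he]
  refine le_trans hkey ?_
  exact mul_le_mul_of_nonneg_left hAB' (by positivity)

/-- Case 3 : far field. -/
theorem case_far {ε a b : ℝ} (hε : 0 < ε) (hs : (2*ε)^2 ≤ a^2+b^2) (hs1 : 1 ≤ a^2+b^2) :
    |a*b| / (((a+ε)^2+b^2) * ((a-ε)^2+b^2)) ≤ 8/9 := by
  set s := a^2+b^2 with hsdef
  have hspos : 0 < s := by nlinarith
  have hAB : (3/4*s)^2 ≤ ((a+ε)^2+b^2) * ((a-ε)^2+b^2) := AB_lower hs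
  have hABpos : 0 < ((a+ε)^2+b^2) * ((a-ε)^2+b^2) := by nlinarith
  rw [div_le_iff₀ hABpos]
  have ht : |a*b| ≤ s/2 := by nlinarith [abs_prod_le_half (a := a) (b := b)]
  nlinarith


theorem kernel_identity (ε x1 x2 w : ℝ) (hε : 0 < ε) :
    ((0 - x2) / ((-ε - x1)^2 + (0 - x2)^2)) * w - ((0 - x2) / ((ε - x1)^2 + (0 - x2)^2)) * w
      = (4*ε) * ((x1 * x2) / (((x1+ε)^2 + x2^2) * ((x1-ε)^2 + x2^2)) * w) := by
  by_cases hA : (x1+ε)^2 + x2^2 = 0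
  · have hb : x2 = 0 := by nlinarith [sq_nonneg (x1+ε), sq_nonneg x2]
    rw [hb]; simp
  by_cases hB : (x1-ε)^2 + x2^2 = 0
  · have hb : x2 = 0 := by nlinarith [sq_nonneg (x1-ε), sq_nonneg x2]
    rw [hb]; simp
  rw [show (-ε - x1)^2 + (0 - x2)^2 = (x1+ε)^2 + x2^2 from by ring,
      show (ε - x1)^2 + (0 - x2)^2 = (x1-ε)^2 + x2^2 from by ring]
  field_simp
  ring

theorem near_majorant {A' x2 w : ℝ} (hA' : 0 ≤ A') (hx2 : x2^2 ≤ A') (hw : |w| ≤ 1) :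
    |(0 - x2) / A' * w| ≤ (if A' ≤ 1 then (Real.sqrt A')⁻¹ else 0) + |w| := by
  have hw0 : 0 ≤ |w| := abs_nonneg w
  rcases eq_or_lt_of_le hA' with h0 | hApos
  · have hx : x2 = 0 := by nlinarith
    rw [hx]
    simp only [sub_zero, zero_sub, neg_zero, zero_div, zero_mul, abs_zero]
    positivity
  have h1 : |(0 - x2) / A' * w| = |x2| / A' * |w| := by
    rw [abs_mul, abs_div, abs_of_pos hApos]
    congr 2
    rw [zero_sub, abs_neg]
  rw [h1]
  have hs : Real.sqrt A' * Real.sqrt A' = A' := Real.mul_self_sqrt hA'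
  have hspos : 0 < Real.sqrt A' := Real.sqrt_pos.2 hApos
  have hxs : |x2| ≤ Real.sqrt A' := by
    rw [← Real.sqrt_sq_eq_abs]
    exact Real.sqrt_le_sqrt hx2
  have hbase : |x2| / A' ≤ (Real.sqrt A')⁻¹ := by
    rw [div_le_iff₀ hApos,
      show (Real.sqrt A')⁻¹ * A' = A' / Real.sqrt A' from (inv_mul_eq_div _ _),
      Real.div_sqrt]
    exact hxs
  by_cases hc : A' ≤ 1
  · rw [if_pos hc]
    have : |x2| / A' * |w| ≤ (Real.sqrt A')⁻¹ * 1 :=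
      mul_le_mul hbase hw (abs_nonneg w) (by positivity)
    linarith
  · rw [if_neg hc]
    push_neg at hc
    have h1A : 1 ≤ Real.sqrt A' := by
      rw [show (1:ℝ) = Real.sqrt 1 from (Real.sqrt_one).symm]
      exact Real.sqrt_le_sqrt hc.le
    have hinv : (Real.sqrt A')⁻¹ ≤ 1 := by
      rw [inv_le_one_iff₀]
      right; exact h1A
    have : |x2| / A' * |w| ≤ 1 * |w| :=
      mul_le_mul (le_trans hbase hinv) le_rfl hw0 zero_le_one
    linarith


theorem sq_le_termM (a b c : ℝ) : b^2 ≤ (c - a)^2 + (0 - b)^2 := by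
  nlinarith [sq_nonneg (c - a)]

theorem abs_le_two_eps {a b ε : ℝ} (hε : 0 ≤ ε) (h : a^2 + b^2 ≤ (2*ε)^2) : |a| ≤ 2*ε := by
  nlinarith [sq_abs a, abs_nonneg a, sq_nonneg b, hε]

theorem cond_near_plus {a b ε : ℝ} (hε : 0 < ε) (h : a^2 + b^2 ≤ (2*ε)^2) :
    (a+ε)^2 + b^2 ≤ (3*ε)^2 := by
  have h1 : |a| ≤ 2*ε := abs_le_two_eps hε.le h
  nlinarith [le_abs_self a, neg_abs_le a]

theorem cond_near_minus {a b ε : ℝ} (hε : 0 < ε) (h : a^2 + b^2 ≤ (2*ε)^2) :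
    (a-ε)^2 + b^2 ≤ (3*ε)^2 := by
  have h1 : |a| ≤ 2*ε := abs_le_two_eps hε.le h
  nlinarith [le_abs_self a, neg_abs_le a]

theorem const_bound64 {k m : ℝ} (hkm : k*m ≤ 1) (hk : 0 ≤ k) (hm : 0 ≤ m) :
    32*k/9*(m*(2*π*1)) ≤ 64*π/9 := by
  have h : 32*k/9*(m*(2*π*1)) = 64*π/9*(k*m) := by ring
  rw [h]
  nlinarith [pi_pos]

def refl2 : (ℝ × ℝ) ≃ᵐ (ℝ × ℝ) := (MeasurableEquiv.refl ℝ).prodCongr (MeasurableEquiv.neg ℝ)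

theorem refl2_mp : MeasurePreserving (⇑refl2) (volume : Measure (ℝ × ℝ)) volume := by
  have h := (MeasurePreserving.id (volume : Measure ℝ)).prod
    (Measure.measurePreserving_neg (volume : Measure ℝ))
  rw [← Measure.volume_eq_prod] at h
  exact h


end Stmt11

open Stmt11

/- `K` plays the role of the Lipschitz constant `‖∇ω‖_{L^∞}` of `ω` on `ℝ²`
(w.r.t. the Euclidean distance), and `m := min{K⁻¹, 1}`. -/
set_option maxHeartbeats 1000000 in
theorem statement11 (I : ℝ) (hI : 1 ≤ I) :
    ∃ C_I : ℝ, 0 < C_I ∧ ∃ εI : ℝ, 0 < εI ∧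
      ∀ ε : ℝ, 0 < ε → ε ≤ εI →
        ∀ ω : ℝ × ℝ → ℝ,
          MemLp ω ⊤ (volume : Measure (ℝ × ℝ)) →
          Integrable ω (volume : Measure (ℝ × ℝ)) →
          (∀ᵐ y : ℝ × ℝ, |ω y| ≤ 1) →
          (∫ y : ℝ × ℝ, |ω y|) ≤ I →
          ∀ K : ℝ≥0,
            (∀ x z : ℝ × ℝ,
              |ω x - ω z| ≤ (K : ℝ) * Real.sqrt ((x.1 - z.1) ^ 2 + (x.2 - z.2) ^ 2)) →
            (K : ℝ) ≤ 1 / ε →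
            (biotSavart ω (-ε, 0)).1 - (biotSavart ω (ε, 0)).1 ≤
              ((4 * |Real.log (min ((K : ℝ))⁻¹ 1)| + C_I) / π) * ε := by
  have hπ : (0:ℝ) < π := pi_pos
  refine ⟨200 + 2*I, by linarith, 1/4, by norm_num, ?_⟩
  intro ε hε hε4 ω hωLp hωInt hω1 hωL1 K hLip hKε
  set k : ℝ := (K : ℝ) with hkdef
  have hk0 : (0:ℝ) ≤ k := K.coe_nonneg
  set m : ℝ := min k⁻¹ 1 with hmdef
  set q : ℝ × ℝ → ℝ :=
    fun y => (y.1 * y.2) / (((y.1+ε)^2 + y.2^2) * ((y.1-ε)^2 + y.2^2)) with hqdef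
  set iminus : ℝ × ℝ → ℝ :=
    fun y => ((0 - y.2) / ((-ε - y.1) ^ 2 + (0 - y.2) ^ 2)) * ω y with himidef
  set iplus : ℝ × ℝ → ℝ :=
    fun y => ((0 - y.2) / ((ε - y.1) ^ 2 + (0 - y.2) ^ 2)) * ω y with hipldef
  have hg1 := gker_calc (R := (1:ℝ)) one_pos
  -- integrability of iminus, iplus
  have hmeasm : AEStronglyMeasurable iminus volume := by
    rw [himidef]
    exact (Measurable.aestronglyMeasurable (by fun_prop)).mul hωInt.aestronglyMeasurable
  have hmeasp : AEStronglyMeasurable iplus volume := by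
    rw [hipldef]
    exact (Measurable.aestronglyMeasurable (by fun_prop)).mul hωInt.aestronglyMeasurable
  have hmajm : ∀ᵐ y : ℝ × ℝ, ‖iminus y‖ ≤ gker 1 (y - ((-ε : ℝ), (0:ℝ))) + |ω y| := by
    filter_upwards [hω1] with y hy
    have hA0 : (0:ℝ) ≤ (-ε - y.1)^2 + (0 - y.2)^2 := by positivity
    have hx2 : (y.2)^2 ≤ (-ε - y.1)^2 + (0 - y.2)^2 := sq_le_termM y.1 y.2 (-ε)
    have h := near_majorant hA0 hx2 hy
    have hyc : y - ((-ε : ℝ), (0:ℝ)) = ((y.1 + ε : ℝ), y.2) := by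
      rw [Prod.ext_iff]
      constructor
      · rw [Prod.fst_sub]; dsimp; ring
      · rw [Prod.snd_sub]; dsimp; ring
    have hgk : gker 1 (y - ((-ε : ℝ), (0:ℝ)))
        = (if (-ε - y.1)^2 + (0 - y.2)^2 ≤ 1 then
            (Real.sqrt ((-ε - y.1)^2 + (0 - y.2)^2))⁻¹ else 0) := by
      rw [hyc, gker_def]
      dsimp
      rw [show (y.1 + ε)^2 + (y.2)^2 = (-ε - y.1)^2 + (0 - y.2)^2 from by ring, one_pow]
    rw [hgk, himidef, Real.norm_eq_abs]
    exact h
  have hmajp : ∀ᵐ y : ℝ × ℝ, ‖iplus y‖ ≤ gker 1 (y - ((ε : ℝ), (0:ℝ))) + |ω y| := by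
    filter_upwards [hω1] with y hy
    have hA0 : (0:ℝ) ≤ (ε - y.1)^2 + (0 - y.2)^2 := by positivity
    have hx2 : (y.2)^2 ≤ (ε - y.1)^2 + (0 - y.2)^2 := sq_le_termM y.1 y.2 ε
    have h := near_majorant hA0 hx2 hy
    have hyc : y - ((ε : ℝ), (0:ℝ)) = ((y.1 - ε : ℝ), y.2) := by
      rw [Prod.ext_iff]
      constructor
      · rw [Prod.fst_sub]
      · rw [Prod.snd_sub]; dsimp; ring
    have hgk : gker 1 (y - ((ε : ℝ), (0:ℝ)))
        = (if (ε - y.1)^2 + (0 - y.2)^2 ≤ 1 then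
            (Real.sqrt ((ε - y.1)^2 + (0 - y.2)^2))⁻¹ else 0) := by
      rw [hyc, gker_def]
      dsimp
      rw [show (y.1 - ε)^2 + (y.2)^2 = (ε - y.1)^2 + (0 - y.2)^2 from by ring, one_pow]
    rw [hgk, hipldef, Real.norm_eq_abs]
    exact h
  have hIntm : Integrable iminus :=
    Integrable.mono' ((hg1.1.comp_sub_right _).add hωInt.abs) hmeasm hmajm
  have hIntp : Integrable iplus :=
    Integrable.mono' ((hg1.1.comp_sub_right _).add hωInt.abs) hmeasp hmajp
  have hqωInt : Integrable (fun y : ℝ × ℝ => q y * ω y) := by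
    have hfn : (fun y : ℝ × ℝ => q y * ω y) = fun y => (1/(4*ε)) * (iminus y - iplus y) := by
      funext y
      simp only [hqdef, himidef, hipldef]
      rw [kernel_identity ε y.1 y.2 (ω y) hε]
      field_simp
    rw [hfn]
    exact (hIntm.sub hIntp).const_mul _
  have hsplit : (∫ y, iminus y) - ∫ y, iplus y = (4*ε) * ∫ y, q y * ω y := by
    rw [← integral_sub hIntm hIntp, ← MeasureTheory.integral_const_mul]
    refine integral_congr_ae (Eventually.of_forall fun y => ?_)
    simp only [hqdef, himidef, hipldef]
    exact kernel_identity ε y.1 y.2 (ω y) hε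
  have hqneg : ∀ y : ℝ × ℝ, q ((y.1, -y.2) : ℝ × ℝ) = - q y := by
    intro y
    show (y.1 * -y.2) / (((y.1+ε)^2 + (-y.2)^2) * ((y.1-ε)^2 + (-y.2)^2)) = - q y
    simp only [hqdef]
    rw [show ((-y.2 : ℝ))^2 = y.2^2 from by ring, mul_neg, neg_div]
  have hcompInt : Integrable ((fun z : ℝ × ℝ => q z * ω z) ∘ ⇑refl2) :=
    (refl2_mp.integrable_comp_emb refl2.measurableEmbedding).2 hqωInt
  have hωeInt : Integrable (fun y : ℝ × ℝ => q y * ω (y.1, -y.2)) := by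
    have hfn : (fun y : ℝ × ℝ => q y * ω (y.1, -y.2))
        = fun y => -(((fun z : ℝ × ℝ => q z * ω z) ∘ ⇑refl2) y) := by
      funext y
      show q y * ω (y.1, -y.2) = -(q (refl2 y) * ω (refl2 y))
      rw [show refl2 y = ((y.1, -y.2) : ℝ × ℝ) from rfl, hqneg]
      ring
    rw [hfn]
    exact hcompInt.neg
  have h1c : ∫ x : ℝ × ℝ, q (refl2 x) * ω (refl2 x) = ∫ z : ℝ × ℝ, q z * ω z :=
    refl2_mp.integral_comp refl2.measurableEmbedding (fun z => q z * ω z)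
  have h2c : ∫ x : ℝ × ℝ, q (refl2 x) * ω (refl2 x)
      = ∫ x : ℝ × ℝ, -(q x * ω (x.1, -x.2)) :=
    integral_congr_ae (Eventually.of_forall fun x => by
      show q (refl2 x) * ω (refl2 x) = -(q x * ω (x.1, -x.2))
      rw [show refl2 x = ((x.1, -x.2) : ℝ × ℝ) from rfl, hqneg]; ring)
  have hrefl : ∫ y, q y * ω y = - ∫ y : ℝ × ℝ, q y * ω (y.1, -y.2) := by
    rw [← h1c, h2c, integral_neg]
  set G : ℝ × ℝ → ℝ := fun y => q y * ω y - q y * ω (y.1, -y.2) with hGdef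
  have hGInt : Integrable G := hqωInt.sub hωeInt
  have hGeq : ∫ y, G y = 2 * ∫ y, q y * ω y := by
    have h3 : ∫ y, G y = (∫ y, q y * ω y) - ∫ y : ℝ × ℝ, q y * ω (y.1, -y.2) := by
      simp only [hGdef]
      exact integral_sub hqωInt hωeInt
    rw [h3]
    linarith [hrefl]
  have hbm : (biotSavart ω (-ε, 0)).1 = (1 / (2*π)) * ∫ y, iminus y := by rw [himidef]; rfl
  have hbp : (biotSavart ω (ε, 0)).1 = (1 / (2*π)) * ∫ y, iplus y := by rw [hipldef]; rfl
  have hLHS : (biotSavart ω (-ε, 0)).1 - (biotSavart ω (ε, 0)).1 = (ε/π) * ∫ y, G y := by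
    rw [hbm, hbp]
    calc (1/(2*π)) * (∫ y, iminus y) - (1/(2*π)) * ∫ y, iplus y
        = (1/(2*π)) * ((∫ y, iminus y) - ∫ y, iplus y) := by ring
      _ = (1/(2*π)) * ((4*ε) * ∫ y, q y * ω y) := by rw [hsplit]
      _ = (ε/π) * (2 * ∫ y, q y * ω y) := by field_simp; ring
      _ = (ε/π) * ∫ y, G y := by rw [hGeq]
  rw [hLHS]
  by_cases hk0' : k = 0
  · have hG0 : ∀ y : ℝ × ℝ, G y = 0 := by
      intro y
      have hd := hLip y (y.1, -y.2)
      rw [hk0', zero_mul] at hd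
      have hzero : ω y - ω ((y.1, -y.2) : ℝ × ℝ) = 0 :=
        abs_eq_zero.1 (le_antisymm hd (abs_nonneg _))
      simp only [hGdef]
      rw [← mul_sub, hzero, mul_zero]
    rw [show (∫ y, G y) = 0 from by rw [show G = fun _ : ℝ × ℝ => (0:ℝ) from funext hG0]; simp]
    rw [mul_zero]
    have hm0 : m = 0 := by rw [hmdef, hk0']; simp
    rw [hm0]
    simp only [Real.log_zero, abs_zero, mul_zero, zero_add]
    have h200 : (0:ℝ) < 200 + 2*I := by linarith
    positivity
  · have hkpos : 0 < k := lt_of_le_of_ne hk0 (Ne.symm hk0')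
    have hm0 : 0 < m := by rw [hmdef]; exact lt_min (by positivity) one_pos
    have hm1 : m ≤ 1 := min_le_right _ _
    have hεm : ε ≤ m := by
      rw [hmdef]
      refine le_min ?_ (by linarith)
      rw [inv_eq_one_div, le_div_iff₀ hkpos]
      rw [le_div_iff₀ hε] at hKε
      linarith
    have hkm : k * m ≤ 1 := by
      have h1 : m ≤ k⁻¹ := min_le_left _ _
      calc k * m ≤ k * k⁻¹ := mul_le_mul_of_nonneg_left h1 hk0
        _ = 1 := mul_inv_cancel₀ (ne_of_gt hkpos)
    set m' : ℝ := max m (2*ε) with hm'def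
    have hm'0 : 0 < m' := lt_of_lt_of_le hm0 (le_max_left _ _)
    have hm'1 : m' ≤ 1 := max_le hm1 (by linarith)
    have hg3 := gker_calc (R := 3*ε) (by positivity)
    have hgm := gker_calc (R := m) hm0
    have hannc := ann_calc hm'0 hm'1
    have hfarc := far_calc (c := 2*ε) (k := 32/9*ε^2) (by positivity)
    have habs : Integrable (fun y : ℝ × ℝ => |ω y|) := hωInt.abs
    have habse : Integrable (fun y : ℝ × ℝ => |ω ((y.1, -y.2) : ℝ × ℝ)|) :=
      (refl2_mp.integrable_comp_emb refl2.measurableEmbedding).2 habs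
    set Φ₁ : ℝ × ℝ → ℝ := fun y =>
      (4/ε) * (gker (3*ε) (y - ((-ε : ℝ), (0:ℝ))) + gker (3*ε) (y - ((ε : ℝ), (0:ℝ)))) with hP1
    set Φ₂ : ℝ × ℝ → ℝ := fun y => (32*k/9) * gker m y with hP2
    set Φ₅ : ℝ × ℝ → ℝ := fun y => (8/9) * (|ω y| + |ω ((y.1, -y.2) : ℝ × ℝ)|) with hP5
    have hΦ₁I : Integrable Φ₁ :=
      ((hg3.1.comp_sub_right _).add (hg3.1.comp_sub_right _)).const_mul _
    have hΦ₂I : Integrable Φ₂ := hgm.1.const_mul _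
    have hΦ₅I : Integrable Φ₅ := (habs.add habse).const_mul _
    set Φ : ℝ × ℝ → ℝ := fun y =>
      Φ₁ y + Φ₂ y + ann m' 1 y + far (2*ε) (32/9*ε^2) y + Φ₅ y with hPdef
    have hΦI : Integrable Φ := (((hΦ₁I.add hΦ₂I).add hannc.1).add hfarc.1).add hΦ₅I
    have hIΦ : ∫ y, Φ y ≤ 4*|Real.log m| + (200 + 2*I) := by
      have e1 : ∫ y, Φ₁ y = 48*π := by
        simp only [hP1]
        rw [MeasureTheory.integral_const_mul,
          integral_add (hg3.1.comp_sub_right _) (hg3.1.comp_sub_right _),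
          integral_sub_right_eq_self (gker (3*ε)) _,
          integral_sub_right_eq_self (gker (3*ε)) _, hg3.2]
        field_simp
        ring
      have e2 : ∫ y, Φ₂ y = 32*k/9 * (m * (2*π*1)) := by
        simp only [hP2]
        rw [MeasureTheory.integral_const_mul, hgm.2]
      have e5 : ∫ y, Φ₅ y = 8/9 * ((∫ y, |ω y|) + ∫ y, |ω y|) := by
        simp only [hP5]
        rw [MeasureTheory.integral_const_mul, integral_add habs habse]
        have hcc : ∫ x : ℝ × ℝ, |ω ((x.1, -x.2) : ℝ × ℝ)| = ∫ z, |ω z| :=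
          refl2_mp.integral_comp refl2.measurableEmbedding (fun z => |ω z|)
        rw [hcc]
      have t1 : Integrable (fun y : ℝ × ℝ => Φ₁ y + Φ₂ y) := hΦ₁I.add hΦ₂I
      have t2 : Integrable (fun y : ℝ × ℝ => Φ₁ y + Φ₂ y + ann m' 1 y) := t1.add hannc.1
      have t3 : Integrable (fun y : ℝ × ℝ =>
          Φ₁ y + Φ₂ y + ann m' 1 y + far (2*ε) (32/9*ε^2) y) := t2.add hfarc.1
      have esum : ∫ y, Φ y = (∫ y, Φ₁ y) + (∫ y, Φ₂ y) + (∫ y, ann m' 1 y)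
          + (∫ y, far (2*ε) (32/9*ε^2) y) + ∫ y, Φ₅ y := by
        simp only [hPdef]
        rw [integral_add t3 hΦ₅I, integral_add t2 hfarc.1, integral_add t1 hannc.1,
          integral_add hΦ₁I hΦ₂I]
      rw [esum, e1, e2, hannc.2, hfarc.2, e5]
      have hππ : π < 3.15 := pi_lt_d2
      have hlog : Real.log (1/m') * 4 ≤ 4*|Real.log m| := by
        have ha1 : Real.log (1/m') = - Real.log m' := by rw [one_div, Real.log_inv]
        have ha2 : Real.log m ≤ Real.log m' := Real.log_le_log hm0 (le_max_left _ _)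
        have ha3 : |Real.log m| = - Real.log m := abs_of_nonpos (Real.log_nonpos hm0.le hm1)
        linarith
      have hfarval : (((2*ε)^2)⁻¹/2) * (2*π*(32/9*ε^2)) = 8*π/9 := by
        field_simp
        ring
      have hΦ₂b : 32*k/9 * (m*(2*π*1)) ≤ 64*π/9 := by
        exact const_bound64 hkm hk0 hm0.le
      have hω0 : 0 ≤ ∫ y, |ω y| := integral_nonneg fun y => abs_nonneg _
      rw [hfarval]
      linarith [hlog, hΦ₂b]
    have hωe0 : ∀ᵐ y : ℝ × ℝ, |ω (refl2 y)| ≤ 1 :=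
      refl2_mp.quasiMeasurePreserving.ae hω1
    have hωe1 : ∀ᵐ y : ℝ × ℝ, |ω ((y.1, -y.2) : ℝ × ℝ)| ≤ 1 := hωe0.mono (fun y h => h)
    have hGb : ∀ᵐ y : ℝ × ℝ, G y ≤ Φ y := by
      filter_upwards [hω1, hωe1] with y h1 h2
      have hq_abs : |q y| = |y.1*y.2| / (((y.1+ε)^2+y.2^2) * ((y.1-ε)^2+y.2^2)) := by
        simp only [hqdef]
        rw [abs_div, abs_of_nonneg
          (by positivity : (0:ℝ) ≤ ((y.1+ε)^2+y.2^2) * ((y.1-ε)^2+y.2^2))]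
      have hd2 : |ω y - ω ((y.1, -y.2) : ℝ × ℝ)| ≤ 2 := by
        calc |ω y - ω ((y.1, -y.2) : ℝ × ℝ)|
            ≤ |ω y| + |ω ((y.1, -y.2) : ℝ × ℝ)| := abs_sub _ _
          _ ≤ 2 := by linarith
      have hdK : |ω y - ω ((y.1, -y.2) : ℝ × ℝ)| ≤ 2*(k*|y.2|) := by
        have hd := hLip y (y.1, -y.2)
        have hproj : (y.1 - ((y.1, -y.2) : ℝ × ℝ).1)^2 + (y.2 - ((y.1, -y.2) : ℝ × ℝ).2)^2
            = (2*y.2)^2 := by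
          dsimp
          ring
        rw [hproj, Real.sqrt_sq_eq_abs, abs_mul, abs_two] at hd
        linarith [hd]
      have hGy : G y ≤ |q y| * |ω y - ω ((y.1, -y.2) : ℝ × ℝ)| := by
        simp only [hGdef]
        calc q y * ω y - q y * ω ((y.1, -y.2) : ℝ × ℝ)
            = q y * (ω y - ω ((y.1, -y.2) : ℝ × ℝ)) := by ring
          _ ≤ |q y * (ω y - ω ((y.1, -y.2) : ℝ × ℝ))| := le_abs_self _
          _ = |q y| * |ω y - ω ((y.1, -y.2) : ℝ × ℝ)| := abs_mul _ _
      have hn₁ : 0 ≤ Φ₁ y := by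
        simp only [hP1]
        have g1 := gker_nonneg (3*ε) (y - ((-ε : ℝ), (0:ℝ)))
        have g2 := gker_nonneg (3*ε) (y - ((ε : ℝ), (0:ℝ)))
        positivity
      have hn₂ : 0 ≤ Φ₂ y := by
        simp only [hP2]
        have g1 := gker_nonneg m y
        positivity
      have hn₃ : 0 ≤ ann m' 1 y := ann_nonneg _ _ _
      have hn₄ : 0 ≤ far (2*ε) (32/9*ε^2) y := far_nonneg _ _ (by positivity) _
      have hn₅ : 0 ≤ Φ₅ y := by
        simp only [hP5]
        positivity
      simp only [hPdef]
      by_cases hcase1 : y.1^2 + y.2^2 ≤ (2*ε)^2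
      · have hc := case_near hε hcase1
        have habs2ε : |y.1| ≤ 2*ε := abs_le_two_eps hε.le hcase1
        have hgm2 : gker (3*ε) (y - ((-ε : ℝ), (0:ℝ))) = (Real.sqrt ((y.1+ε)^2+y.2^2))⁻¹ := by
          have hyc : y - ((-ε : ℝ), (0:ℝ)) = ((y.1 + ε : ℝ), y.2) := by
            rw [Prod.ext_iff]
            constructor
            · rw [Prod.fst_sub]; dsimp; ring
            · rw [Prod.snd_sub]; dsimp; ring
          rw [hyc, gker_def]
          dsimp
          rw [if_pos (cond_near_plus hε hcase1)]
        have hgp2 : gker (3*ε) (y - ((ε : ℝ), (0:ℝ))) = (Real.sqrt ((y.1-ε)^2+y.2^2))⁻¹ := by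
          have hyc : y - ((ε : ℝ), (0:ℝ)) = ((y.1 - ε : ℝ), y.2) := by
            rw [Prod.ext_iff]
            constructor
            · rw [Prod.fst_sub]
            · rw [Prod.snd_sub]; dsimp; ring
          rw [hyc, gker_def]
          dsimp
          rw [if_pos (cond_near_minus hε hcase1)]
        have hstep : G y ≤ Φ₁ y := by
          calc G y ≤ |q y| * |ω y - ω ((y.1, -y.2) : ℝ × ℝ)| := hGy
            _ ≤ |q y| * 2 := mul_le_mul_of_nonneg_left hd2 (abs_nonneg _)
            _ = |y.1*y.2| / (((y.1+ε)^2+y.2^2) * ((y.1-ε)^2+y.2^2)) * 2 := by rw [hq_abs]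
            _ ≤ (4/ε) * ((Real.sqrt ((y.1+ε)^2+y.2^2))⁻¹
                + (Real.sqrt ((y.1-ε)^2+y.2^2))⁻¹) := hc
            _ = Φ₁ y := by simp only [hP1]; rw [hgm2, hgp2]
        exact le_trans hstep (le_trans (le_add_of_nonneg_right hn₂) (le_trans (le_add_of_nonneg_right hn₃) (le_trans (le_add_of_nonneg_right hn₄) (le_add_of_nonneg_right hn₅))))
      · push_neg at hcase1
        by_cases hcase2 : y.1^2+y.2^2 ≤ m^2
        · have hc := case_lip hε hk0 hcase1.le
          have hg : gker m y = (Real.sqrt (y.1^2+y.2^2))⁻¹ := by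
            rw [gker_def, if_pos hcase2]
          have hstep : G y ≤ Φ₂ y := by
            calc G y ≤ |q y| * |ω y - ω ((y.1, -y.2) : ℝ × ℝ)| := hGy
              _ ≤ |q y| * (2*(k*|y.2|)) := mul_le_mul_of_nonneg_left hdK (abs_nonneg _)
              _ = |y.1*y.2| / (((y.1+ε)^2+y.2^2) * ((y.1-ε)^2+y.2^2)) * (2*(k*|y.2|)) := by
                  rw [hq_abs]
              _ ≤ 32*k/9 * (Real.sqrt (y.1^2+y.2^2))⁻¹ := hc
              _ = Φ₂ y := by simp only [hP2]; rw [hg]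
          exact le_trans hstep (le_trans (le_add_of_nonneg_left hn₁) (le_trans (le_add_of_nonneg_right hn₃) (le_trans (le_add_of_nonneg_right hn₄) (le_add_of_nonneg_right hn₅))))
        · push_neg at hcase2
          by_cases hcase3 : y.1^2+y.2^2 ≤ 1
          · have hc := case_ann hε hcase1.le
            have hgann : ann m' 1 y = 2*|y.1*y.2| / (y.1^2+y.2^2)^2 := by
              rw [ann_def, if_pos]
              constructor
              · rw [hm'def]
                rcases max_cases m (2*ε) with ⟨hmx, _⟩ | ⟨hmx, _⟩ <;> rw [hmx]
                · linarith [hcase2]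
                · linarith [hcase1]
              · rw [one_pow]; exact hcase3
            have hgfar : far (2*ε) (32/9*ε^2) y = 32/9*ε^2 / (y.1^2+y.2^2)^2 := by
              rw [far_def, if_pos hcase1.le]
            have hstep : G y ≤ ann m' 1 y + far (2*ε) (32/9*ε^2) y := by
              calc G y ≤ |q y| * |ω y - ω ((y.1, -y.2) : ℝ × ℝ)| := hGy
                _ ≤ |q y| * 2 := mul_le_mul_of_nonneg_left hd2 (abs_nonneg _)
                _ = |y.1*y.2| / (((y.1+ε)^2+y.2^2) * ((y.1-ε)^2+y.2^2)) * 2 := by rw [hq_abs]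
                _ ≤ 2*|y.1*y.2|/(y.1^2+y.2^2)^2 + 32/9*ε^2/(y.1^2+y.2^2)^2 := hc
                _ = ann m' 1 y + far (2*ε) (32/9*ε^2) y := by rw [hgann, hgfar]
            refine le_trans hstep (le_trans ?_ (le_add_of_nonneg_right hn₅))
            have h12 : ann m' 1 y + far (2*ε) (32/9*ε^2) y
                ≤ (Φ₁ y + Φ₂ y + ann m' 1 y) + far (2*ε) (32/9*ε^2) y := by
              refine add_le_add_left ?_ _
              exact le_add_of_nonneg_left (add_nonneg hn₁ hn₂)
            exact h12
          · push_neg at hcase3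
            have hc := case_far hε hcase1.le hcase3.le
            have hqle : |q y| ≤ 8/9 := by rw [hq_abs]; exact hc
            have hd5 : |ω y - ω ((y.1, -y.2) : ℝ × ℝ)|
                ≤ |ω y| + |ω ((y.1, -y.2) : ℝ × ℝ)| := abs_sub _ _
            have hstep : G y ≤ Φ₅ y := by
              calc G y ≤ |q y| * |ω y - ω ((y.1, -y.2) : ℝ × ℝ)| := hGy
                _ ≤ (8/9) * (|ω y| + |ω ((y.1, -y.2) : ℝ × ℝ)|) :=
                    mul_le_mul hqle hd5 (abs_nonneg _) (by norm_num)
                _ = Φ₅ y := by simp only [hP5]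
            exact le_trans hstep (le_add_of_nonneg_left
              (add_nonneg (add_nonneg (add_nonneg hn₁ hn₂) hn₃) hn₄))
    have hGle : ∫ y, G y ≤ ∫ y, Φ y := integral_mono_ae hGInt hΦI hGb
    calc (ε/π) * ∫ y, G y ≤ (ε/π) * (4*|Real.log m| + (200+2*I)) :=
        mul_le_mul_of_nonneg_left (le_trans hGle hIΦ) (by positivity)
      _ = ((4*|Real.log m| + (200 + 2*I))/π) * ε := by ring


end
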